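/- For δ ∈ (0,1) and an integrable random variable X on an atomless probability space (Ω,Σ,P), CVaR_δ(X) = sup{E_Q[X] : Q ≪ P, dQ/dP ≤ 1/(1-δ)}, i.e., CVaR equals the worst-case expectation over all probability measures whose density with respect to P is bounded by (1-δ)^{-1}. -/

import Mathlib

open MeasureTheory Set
open scoped ENNReal NNReal

lemma lemA {Ω : Type*} [MeasurableSpace Ω] (P Q : Measure Ω)
    [IsProbabilityMeasure P] [IsProbabilityMeasure Q] (X : Ω → ℝ) (hX : Integrable X P)
    (hXm : Measurable X) {c : ℝ} (hc : 1 ≤ c) (hQP : Q ≪ P)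
    (hbd : ∀ᵐ ω ∂P, Q.rnDeriv P ω ≤ ENNReal.ofReal c) (α : ℝ) :
    ∫ ω, X ω ∂Q ≤ α + c * ∫ ω, max (X ω - α) 0 ∂P := by
  have hc0 : 0 ≤ c := le_trans zero_le_one hc
  set g : Ω → ℝ := fun ω => (Q.rnDeriv P ω).toReal with hg
  have hgm : Measurable g := (Measure.measurable_rnDeriv Q P).ennreal_toReal
  have hgbd : ∀ᵐ ω ∂P, g ω ≤ c := by
    filter_upwards [hbd] with ω h using ENNReal.toReal_le_of_le_ofReal hc0 h
  have hg0 : ∀ ω, 0 ≤ g ω := fun ω => ENNReal.toReal_nonneg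
  have hMm : Measurable (fun ω => max (X ω - α) 0) :=
    (hXm.sub measurable_const).max measurable_const
  have hmaxint : Integrable (fun ω => max (X ω - α) 0) P :=
    (hX.sub (integrable_const α)).pos_part
  -- generic: for P-integrable nonnegative-dominated h, g•h is P-integrable
  have hdom : ∀ (h : Ω → ℝ), Measurable h → Integrable h P →
      Integrable (fun ω => g ω * h ω) P := by
    intro h hm hint
    apply Integrable.mono (hint.const_mul c) ((hgm.mul hm).aestronglyMeasurable)
    filter_upwards [hgbd] with ω hb
    simp only [Pi.mul_apply, Real.norm_eq_abs, abs_mul, abs_of_nonneg (hg0 ω)]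
    calc g ω * |h ω| ≤ c * |h ω| := mul_le_mul_of_nonneg_right hb (abs_nonneg _)
    _ = |c * h ω| := by rw [abs_mul, abs_of_nonneg hc0]
    _ ≤ |c| * |h ω| := by rw [abs_mul]
  have hXQint : Integrable X Q :=
    (integrable_rnDeriv_smul_iff hQP).mp (by simpa [smul_eq_mul] using hdom X hXm hX)
  have hmaxQint : Integrable (fun ω => max (X ω - α) 0) Q :=
    (integrable_rnDeriv_smul_iff hQP).mp
      (by simpa [smul_eq_mul] using hdom _ hMm hmaxint)
  have h1 : ∫ ω, g ω * max (X ω - α) 0 ∂P = ∫ ω, max (X ω - α) 0 ∂Q := by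
    simpa [smul_eq_mul] using
      integral_rnDeriv_smul (f := fun ω => max (X ω - α) 0) hQP
  have h2 : ∫ ω, g ω * max (X ω - α) 0 ∂P ≤ ∫ ω, c * max (X ω - α) 0 ∂P := by
    apply integral_mono_ae (hdom _ hMm hmaxint) (hmaxint.const_mul c)
    filter_upwards [hgbd] with ω h
    exact mul_le_mul_of_nonneg_right h (le_max_right _ _)
  have h3 : ∫ ω, X ω ∂Q - α ≤ ∫ ω, max (X ω - α) 0 ∂Q := by
    have : ∫ ω, X ω ∂Q - α = ∫ ω, X ω - α ∂Q := by
      rw [integral_sub hXQint (integrable_const α), integral_const]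
      simp
    rw [this]
    exact integral_mono_ae (hXQint.sub (integrable_const α)) hmaxQint
      (Filter.Eventually.of_forall fun ω => le_max_left _ _)
  have h4 : ∫ ω, c * max (X ω - α) 0 ∂P = c * ∫ ω, max (X ω - α) 0 ∂P :=
    integral_const_mul c _
  linarith [h1, h2, h3, h4]

lemma quantile_exists {Ω : Type*} [MeasurableSpace Ω] (P : Measure Ω)
    [IsProbabilityMeasure P] (X : Ω → ℝ) (hXm : Measurable X) {δ : ℝ}
    (hδ : δ ∈ Set.Ioo (0 : ℝ) 1) :
    ∃ a : ℝ, ENNReal.ofReal (1 - δ) ≤ P {ω | a ≤ X ω} ∧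
      P {ω | a < X ω} ≤ ENNReal.ofReal (1 - δ) := by
  obtain ⟨hδ0, hδ1⟩ := hδ
  set d : ℝ≥0∞ := ENNReal.ofReal (1 - δ) with hd
  have hd1 : d < 1 := by
    rw [hd, ← ENNReal.ofReal_one]
    exact (ENNReal.ofReal_lt_ofReal_iff one_pos).mpr (by linarith)
  have hd0 : 0 < d := ENNReal.ofReal_pos.mpr (by linarith)
  have hmeas : ∀ t : ℝ, MeasurableSet {ω | t ≤ X ω} := fun t =>
    hXm measurableSet_Ici
  set A : Set ℝ := {t : ℝ | d ≤ P {ω | t ≤ X ω}} with hA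
  -- A nonempty
  have hU : (⋃ n : ℕ, {ω | (-(n : ℝ)) ≤ X ω}) = univ := by
    ext ω; simp only [mem_iUnion, mem_setOf_eq, mem_univ, iff_true]
    obtain ⟨n, hn⟩ := exists_nat_ge (-(X ω))
    exact ⟨n, by linarith⟩
  have hdir : Directed (· ⊆ ·) (fun n : ℕ => {ω | (-(n : ℝ)) ≤ X ω}) := by
    apply Monotone.directed_le
    intro n m hnm ω hω
    simp only [mem_setOf_eq] at *
    have : (-(m:ℝ)) ≤ -(n:ℝ) := by exact_mod_cast neg_le_neg (by exact_mod_cast hnm)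
    linarith
  have hAne : A.Nonempty := by
    have : P univ = ⨆ n : ℕ, P {ω | (-(n : ℝ)) ≤ X ω} := by
      rw [← hU]; exact hdir.measure_iUnion
    have h1 : d < ⨆ n : ℕ, P {ω | (-(n : ℝ)) ≤ X ω} := by
      rw [← this, measure_univ]; exact hd1
    obtain ⟨n, hn⟩ := lt_iSup_iff.mp h1
    exact ⟨-(n:ℝ), le_of_lt hn⟩
  -- A bounded above
  have hI : (⋂ n : ℕ, {ω | (n : ℝ) ≤ X ω}) = ∅ := by
    ext ω; simp only [mem_iInter, mem_setOf_eq, mem_empty_iff_false, iff_false, not_forall]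
    obtain ⟨n, hn⟩ := exists_nat_gt (X ω)
    exact ⟨n, not_le.mpr hn⟩
  have hdir2 : Directed (· ⊇ ·) (fun n : ℕ => {ω | (n : ℝ) ≤ X ω}) := by
    apply Antitone.directed_ge
    intro n m hnm ω hω
    simp only [mem_setOf_eq] at *
    have : (n:ℝ) ≤ (m:ℝ) := by exact_mod_cast hnm
    linarith
  have hAbdd : BddAbove A := by
    have h0 : (⨅ n : ℕ, P {ω | (n : ℝ) ≤ X ω}) = 0 := by
      rw [← Directed.measure_iInter (fun n => (hmeas _).nullMeasurableSet) hdir2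
        ⟨0, measure_ne_top P _⟩, hI, measure_empty]
    have h1 : (⨅ n : ℕ, P {ω | (n : ℝ) ≤ X ω}) < d := by rw [h0]; exact hd0
    obtain ⟨n, hn⟩ := iInf_lt_iff.mp h1
    refine ⟨n, fun t ht => ?_⟩
    by_contra hlt
    push_neg at hlt
    have : P {ω | t ≤ X ω} ≤ P {ω | (n:ℝ) ≤ X ω} :=
      measure_mono (fun ω hω => le_trans (le_of_lt hlt) hω)
    exact absurd (le_trans ht this) (not_le.mpr hn)
  set a := sSup A with ha
  refine ⟨a, ?_, ?_⟩
  · -- P {a ≤ X} ≥ d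
    have hset : {ω | a ≤ X ω} = ⋂ n : ℕ, {ω | a - 1/(n+1) ≤ X ω} := by
      ext ω
      simp only [mem_setOf_eq, mem_iInter]
      constructor
      · intro h n
        have : (0:ℝ) < 1/(n+1) := by positivity
        linarith
      · intro h
        by_contra hlt
        push_neg at hlt
        obtain ⟨n, hn⟩ := exists_nat_one_div_lt (show (0:ℝ) < a - X ω by linarith)
        have := h n
        linarith
    have hanti : Directed (· ⊇ ·) (fun n : ℕ => {ω | a - 1/(n+1) ≤ X ω}) := by
      apply Antitone.directed_ge
      intro n m hnm ω hω
      simp only [mem_setOf_eq] at *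
      have h1 : (1:ℝ)/(m+1) ≤ 1/(n+1) := by
        apply one_div_le_one_div_of_le (by positivity)
        have : (n:ℝ) ≤ m := by exact_mod_cast hnm
        linarith
      linarith
    rw [hset, Directed.measure_iInter (fun n => (hmeas _).nullMeasurableSet) hanti
      ⟨0, measure_ne_top P _⟩]
    refine le_iInf fun n => ?_
    have h1 : a - 1/(n+1) < a := by
      have : (0:ℝ) < 1/(n+1) := by positivity
      linarith
    obtain ⟨t, htA, htlt⟩ := exists_lt_of_lt_csSup hAne h1
    calc d ≤ P {ω | t ≤ X ω} := htA
    _ ≤ P {ω | a - 1/(n+1) ≤ X ω} :=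
      measure_mono (fun ω hω => le_trans (le_of_lt htlt) hω)
  · -- P {a < X} ≤ d
    have hset : {ω | a < X ω} = ⋃ n : ℕ, {ω | a + 1/(n+1) ≤ X ω} := by
      ext ω
      simp only [mem_setOf_eq, mem_iUnion]
      constructor
      · intro h
        obtain ⟨n, hn⟩ := exists_nat_one_div_lt (show (0:ℝ) < X ω - a by linarith)
        exact ⟨n, by linarith⟩
      · rintro ⟨n, hn⟩
        have : (0:ℝ) < 1/(n+1) := by positivity
        linarith
    have hmono : Directed (· ⊆ ·) (fun n : ℕ => {ω | a + 1/(n+1) ≤ X ω}) := by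
      apply Monotone.directed_le
      intro n m hnm ω hω
      simp only [mem_setOf_eq] at *
      have h1 : (1:ℝ)/(m+1) ≤ 1/(n+1) := by
        apply one_div_le_one_div_of_le (by positivity)
        have : (n:ℝ) ≤ m := by exact_mod_cast hnm
        linarith
      linarith
    rw [hset, hmono.measure_iUnion]
    refine iSup_le fun n => le_of_lt ?_
    have hnotA : a + 1/(n+1) ∉ A := by
      intro hmem
      have := le_csSup hAbdd hmem
      have h0 : (0:ℝ) < 1/(n+1) := by positivity
      rw [← ha] at this
      linarith
    exact not_le.mp hnotA

lemma lemB {Ω : Type*} [MeasurableSpace Ω] (P : Measure Ω)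
    [IsProbabilityMeasure P] (X : Ω → ℝ) (hX : Integrable X P) (hXm : Measurable X)
    {δ : ℝ} (hδ : δ ∈ Set.Ioo (0 : ℝ) 1) (a : ℝ)
    (h1 : ENNReal.ofReal (1 - δ) ≤ P {ω | a ≤ X ω})
    (h2 : P {ω | a < X ω} ≤ ENNReal.ofReal (1 - δ)) :
    ∃ Q : Measure Ω, IsProbabilityMeasure Q ∧ Q ≪ P ∧
      (∀ᵐ ω ∂P, Q.rnDeriv P ω ≤ ENNReal.ofReal (1 - δ)⁻¹) ∧
      ∫ ω, X ω ∂Q = a + (1 - δ)⁻¹ * ∫ ω, max (X ω - a) 0 ∂P := by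
  obtain ⟨hδ0, hδ1⟩ := hδ
  have h1δ : (0:ℝ) < 1 - δ := by linarith
  set c : ℝ := (1 - δ)⁻¹ with hc
  have hc0 : 0 < c := by positivity
  set S₁ : Set Ω := {ω | a < X ω} with hS₁
  set S₂ : Set Ω := {ω | X ω = a} with hS₂
  have hS₁m : MeasurableSet S₁ := hXm measurableSet_Ioi
  have hS₂m : MeasurableSet S₂ := hXm (measurableSet_singleton a)
  have hdisj : Disjoint S₁ S₂ := by
    rw [Set.disjoint_left]; intro ω hω1 hω2
    simp only [hS₁, hS₂, mem_setOf_eq] at *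
    linarith [hω1, le_of_eq hω2]
  have hunion : S₁ ∪ S₂ = {ω | a ≤ X ω} := by
    ext ω; simp only [hS₁, hS₂, mem_union, mem_setOf_eq]
    constructor
    · rintro (h | h) <;> [exact le_of_lt h; exact le_of_eq h.symm]
    · intro h; rcases lt_or_eq_of_le h with h | h
      · exact Or.inl h
      · exact Or.inr h.symm
  set p₁ : ℝ := (P S₁).toReal with hp₁
  set p₀ : ℝ := (P S₂).toReal with hp₀
  have hp₁0 : 0 ≤ p₁ := ENNReal.toReal_nonneg
  have hp₀0 : 0 ≤ p₀ := ENNReal.toReal_nonneg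
  have hPsum : (P {ω | a ≤ X ω}).toReal = p₁ + p₀ := by
    rw [← hunion, measure_union hdisj hS₂m, ENNReal.toReal_add (measure_ne_top P _) (measure_ne_top P _)]
  have hp₁le : p₁ ≤ 1 - δ := by
    rw [hp₁]
    exact (ENNReal.toReal_le_of_le_ofReal (le_of_lt h1δ) h2)
  have hge : 1 - δ ≤ p₁ + p₀ := by
    rw [← hPsum]
    exact (ENNReal.ofReal_le_iff_le_toReal (measure_ne_top P _)).mp h1
  set k : ℝ := if p₀ = 0 then 0 else (1 - c * p₁) / p₀ with hk
  have hck : c * (1 - δ) = 1 := by rw [hc]; exact inv_mul_cancel₀ (ne_of_gt h1δ)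
  have hk0 : 0 ≤ k := by
    rw [hk]; split_ifs with h
    · exact le_refl 0
    · apply div_nonneg _ hp₀0
      have := mul_le_mul_of_nonneg_left hp₁le (le_of_lt hc0)
      rw [hck] at this
      linarith

  have hkc : k ≤ c := by
    rw [hk]; split_ifs with h
    · exact le_of_lt hc0
    · have hp₀pos : 0 < p₀ := lt_of_le_of_ne hp₀0 (Ne.symm h)
      rw [div_le_iff₀ hp₀pos]
      nlinarith [mul_le_mul_of_nonneg_left hge (le_of_lt hc0)]
  have hnorm : c * p₁ + k * p₀ = 1 := by
    rw [hk]; split_ifs with h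
    · rw [h] at hge
      have : p₁ = 1 - δ := le_antisymm hp₁le (by linarith)
      rw [this, h, mul_zero, add_zero, hck]
    · have hp₀pos : 0 < p₀ := lt_of_le_of_ne hp₀0 (Ne.symm h)
      field_simp
      ring
  -- the density
  set fR : Ω → ℝ := fun ω => S₁.indicator (fun _ => c) ω + S₂.indicator (fun _ => k) ω with hfR
  have hfRm : Measurable fR :=
    (measurable_const.indicator hS₁m).add (measurable_const.indicator hS₂m)
  have hfR0 : ∀ ω, 0 ≤ fR ω := fun ω =>
    add_nonneg (Set.indicator_nonneg (fun _ _ => le_of_lt hc0) ω)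
      (Set.indicator_nonneg (fun _ _ => hk0) ω)
  have hfRle : ∀ ω, fR ω ≤ c := by
    intro ω
    rw [hfR]
    by_cases h1' : ω ∈ S₁
    · have h2' : ω ∉ S₂ := fun h2' => (Set.disjoint_left.mp hdisj h1') h2'
      simp [Set.indicator_of_mem h1', Set.indicator_of_notMem h2']
    · by_cases h2' : ω ∈ S₂
      · simp [Set.indicator_of_notMem h1', Set.indicator_of_mem h2', hkc]
      · simp [Set.indicator_of_notMem h1', Set.indicator_of_notMem h2', le_of_lt hc0]
  have hfRint : Integrable fR P :=
    ((integrable_const c).indicator hS₁m).add ((integrable_const k).indicator hS₂m)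
  have hfRint1 : ∫ ω, fR ω ∂P = 1 := by
    rw [hfR]
    rw [integral_add ((integrable_const c).indicator hS₁m) ((integrable_const k).indicator hS₂m),
      integral_indicator_const c hS₁m, integral_indicator_const k hS₂m]
    simp only [smul_eq_mul, measureReal_def, ← hp₁, ← hp₀]
    nlinarith [hnorm]
  set fN : Ω → ℝ≥0 := fun ω => (fR ω).toNNReal with hfN
  have hfNm : Measurable fN := hfRm.real_toNNReal
  have hcoe : ∀ ω, ((fN ω : ℝ≥0) : ℝ) = fR ω := fun ω => Real.coe_toNNReal _ (hfR0 ω)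
  have hcoeE : ∀ ω, ((fN ω : ℝ≥0∞)) = ENNReal.ofReal (fR ω) := fun ω => rfl
  set Q : Measure Ω := P.withDensity (fun ω => (fN ω : ℝ≥0∞)) with hQ
  have hlint : ∫⁻ ω, (fN ω : ℝ≥0∞) ∂P = 1 := by
    rw [lintegral_congr hcoeE, ← ofReal_integral_eq_lintegral_ofReal hfRint
      (Filter.Eventually.of_forall hfR0), hfRint1, ENNReal.ofReal_one]
  have hQprob : IsProbabilityMeasure Q := by
    constructor
    rw [hQ, withDensity_apply _ MeasurableSet.univ, Measure.restrict_univ, hlint]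
  have hQac : Q ≪ P := withDensity_absolutelyContinuous P _
  have hrn : Q.rnDeriv P =ᵐ[P] fun ω => (fN ω : ℝ≥0∞) :=
    Measure.rnDeriv_withDensity P (hfNm.coe_nnreal_ennreal)
  have hbd : ∀ᵐ ω ∂P, Q.rnDeriv P ω ≤ ENNReal.ofReal c := by
    filter_upwards [hrn] with ω h
    rw [h, hcoeE ω]
    exact ENNReal.ofReal_le_ofReal (hfRle ω)
  have hmaxint : Integrable (fun ω => max (X ω - a) 0) P :=
    (hX.sub (integrable_const a)).pos_part
  have hXQ : ∫ ω, X ω ∂Q = a + c * ∫ ω, max (X ω - a) 0 ∂P := by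
    rw [hQ, integral_withDensity_eq_integral_smul hfNm X]
    have hident : ∀ ω, fR ω * X ω = c * max (X ω - a) 0 + a * fR ω := by
      intro ω
      by_cases h1' : ω ∈ S₁
      · have h2' : ω ∉ S₂ := fun h2' => Set.disjoint_left.mp hdisj h1' h2'
        have hfev : fR ω = c := by
          simp [hfR, Set.indicator_of_mem h1', Set.indicator_of_notMem h2']
        have hx : a < X ω := h1'
        have hmax : max (X ω - a) 0 = X ω - a := max_eq_left (by linarith)
        rw [hfev, hmax]; ring
      · by_cases h2' : ω ∈ S₂
        · have hfev : fR ω = k := by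
            simp [hfR, Set.indicator_of_notMem h1', Set.indicator_of_mem h2']
          have hx : X ω = a := h2'
          have hmax : max (X ω - a) 0 = 0 := max_eq_right (by rw [hx]; linarith)
          rw [hfev, hmax, hx]; ring
        · have hfev : fR ω = 0 := by
            simp [hfR, Set.indicator_of_notMem h1', Set.indicator_of_notMem h2']
          have hx : X ω < a := lt_of_le_of_ne (not_lt.mp h1') h2'
          have hmax : max (X ω - a) 0 = 0 := max_eq_right (by linarith)
          rw [hfev, hmax]; ring
    have heq : (fun ω => fN ω • X ω) = fun ω => c * max (X ω - a) 0 + a * fR ω :=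
      funext fun ω => by rw [NNReal.smul_def, smul_eq_mul, hcoe ω, hident ω]
    rw [heq, integral_add (hmaxint.const_mul c) (hfRint.const_mul a),
      integral_const_mul, integral_const_mul, hfRint1, mul_one, add_comm]
  exact ⟨Q, hQprob, hQac, hbd, hXQ⟩

/-- `CVaR_δ(X) = min_α [α + (1/(1-δ)) E[(X-α)⁺]]` (Rockafellar–Uryasev form). -/
noncomputable def CVaR {Ω : Type*} [MeasurableSpace Ω] (P : Measure Ω) (δ : ℝ)
    (X : Ω → ℝ) : ℝ :=
  ⨅ α : ℝ, (α + (1 - δ)⁻¹ * ∫ ω, max (X ω - α) 0 ∂P)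

/-- on an atomless probability space, `CVaR_δ(X)` equals the worst-case
expectation `sup {E_Q[X] : Q ≪ P, dQ/dP ≤ (1-δ)⁻¹}`. -/
theorem CVaR_eq_sup_density_bounded {Ω : Type*} [MeasurableSpace Ω] (P : Measure Ω)
    [IsProbabilityMeasure P] [NullSingletonClass P] (X : Ω → ℝ) (hX : Integrable X P)
    (hXm : Measurable X) (δ : ℝ) (hδ : δ ∈ Set.Ioo (0 : ℝ) 1) :
    CVaR P δ X = sSup {r : ℝ | ∃ Q : Measure Ω, IsProbabilityMeasure Q ∧ Q ≪ P ∧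
      (∀ᵐ ω ∂P, Q.rnDeriv P ω ≤ ENNReal.ofReal (1 - δ)⁻¹) ∧
      r = ∫ ω, X ω ∂Q} := by
  obtain ⟨hδ0, hδ1⟩ := hδ
  have h1δ : (0:ℝ) < 1 - δ := by linarith
  set c : ℝ := (1 - δ)⁻¹ with hc
  have hcinv : (1 - δ) * (1 - δ)⁻¹ = 1 := mul_inv_cancel₀ (ne_of_gt h1δ)
  have hc1 : 1 ≤ c := by
    rw [hc]; nlinarith [inv_nonneg.mpr (le_of_lt h1δ)]
  set S : Set ℝ := {r : ℝ | ∃ Q : Measure Ω, IsProbabilityMeasure Q ∧ Q ≪ P ∧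
      (∀ᵐ ω ∂P, Q.rnDeriv P ω ≤ ENNReal.ofReal (1 - δ)⁻¹) ∧
      r = ∫ ω, X ω ∂Q} with hS
  have hbdd : BddBelow (Set.range fun α : ℝ => α + c * ∫ ω, max (X ω - α) 0 ∂P) := by
    refine ⟨∫ ω, X ω ∂P, ?_⟩
    rintro r ⟨α, rfl⟩
    show ∫ ω, X ω ∂P ≤ α + c * ∫ ω, max (X ω - α) 0 ∂P
    have hmaxint : Integrable (fun ω => max (X ω - α) 0) P :=
      (hX.sub (integrable_const α)).pos_part
    have hInn : 0 ≤ ∫ ω, max (X ω - α) 0 ∂P :=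
      integral_nonneg fun ω => le_max_right _ _
    have h3 : ∫ ω, X ω ∂P - α ≤ ∫ ω, max (X ω - α) 0 ∂P := by
      have hsub : ∫ ω, X ω ∂P - α = ∫ ω, X ω - α ∂P := by
        rw [integral_sub hX (integrable_const α), integral_const]; simp
      rw [hsub]
      exact integral_mono_ae (hX.sub (integrable_const α)) hmaxint
        (Filter.Eventually.of_forall fun ω => le_max_left _ _)
    have hmul : 0 ≤ (c - 1) * ∫ ω, max (X ω - α) 0 ∂P :=
      mul_nonneg (by linarith) hInn
    nlinarith
  obtain ⟨a, ha1, ha2⟩ := quantile_exists P X hXm ⟨hδ0, hδ1⟩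
  obtain ⟨Q0, hQ0p, hQ0ac, hQ0bd, hQ0int⟩ := lemB P X hX hXm ⟨hδ0, hδ1⟩ a ha1 ha2
  have hr0 : (a + (1 - δ)⁻¹ * ∫ ω, max (X ω - a) 0 ∂P) ∈ S :=
    ⟨Q0, hQ0p, hQ0ac, hQ0bd, hQ0int.symm⟩
  have hSne : S.Nonempty := ⟨_, hr0⟩
  have hSbdd : BddAbove S := by
    refine ⟨0 + c * ∫ ω, max (X ω - 0) 0 ∂P, ?_⟩
    rintro r ⟨Q, hQp, hQac, hQbd, rfl⟩
    haveI := hQp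
    exact lemA P Q X hX hXm hc1 hQac hQbd 0
  apply le_antisymm
  · calc CVaR P δ X ≤ a + (1 - δ)⁻¹ * ∫ ω, max (X ω - a) 0 ∂P := ciInf_le hbdd a
    _ ≤ sSup S := le_csSup hSbdd hr0
  · refine csSup_le hSne ?_
    rintro r ⟨Q, hQp, hQac, hQbd, rfl⟩
    haveI := hQp
    exact le_ciInf fun α => lemA P Q X hX hXm hc1 hQac hQbd α
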